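/- Structure of intersections of the hypersurfaces A_I (Lemma 4.6): Let K be a field, n ≥ 1, and let I_1,…,I_k be nonempty subsets of {1,…,n}. Let X = {x ∈ K^n : Π_{i∈I_j} x_i = 1 for all j = 1,…,k}. Let s = n − |I_1 ∪ … ∪ I_k|, let L ⊆ ℤ^n be the subgroup generated by the indicator vectors a_j = (𝟙_{I_j}(1),…,𝟙_{I_j}(n)), let r ≥ 1 be the rank of L and c_1,…,c_r ∈ ℤ its elementary divisors (so s + r ≤ n). Then there is a bijection, given in both directions by monomial maps in the coordinates, between X and K^s × (K^×)^{n−s−r} × Π_{i=1}^r {y ∈ K^× : y^{c_i} = 1}. -/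

import Mathlib

section Helpers

variable {n : ℕ}

lemma zpow_sum' {G : Type*} [CommGroup G] {α : Type*} (g : G) (s : Finset α) (v : α → ℤ) :
    g ^ (∑ j ∈ s, v j) = ∏ j ∈ s, g ^ v j := by
  induction s using Finset.cons_induction with
  | empty => simp
  | cons a s ha ih => rw [Finset.sum_cons, Finset.prod_cons, zpow_add, ih]

lemma prod_prod_zpow {G : Type*} [CommGroup G] (w : Fin n → G) (s : Finset (Fin n))
    (A : Fin n → Fin n → ℤ) (B : Fin n → ℤ) :
    ∏ j ∈ s, (∏ i, w i ^ A j i) ^ B j = ∏ i, w i ^ (∑ j ∈ s, A j i * B j) := by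
  have h1 : ∀ j ∈ s, (∏ i, w i ^ A j i) ^ B j = ∏ i, w i ^ (A j i * B j) := by
    intro j _
    rw [← Finset.prod_zpow]
    exact Finset.prod_congr rfl fun i _ => (zpow_mul (w i) (A j i) (B j)).symm
  rw [Finset.prod_congr rfl h1, Finset.prod_comm]
  exact Finset.prod_congr rfl fun i _ => (zpow_sum' _ _ _).symm

lemma prod_zpow_eq_single {M : Type*} [DivisionCommMonoid M] (g : Fin n → M) (v : Fin n → ℤ)
    (j : Fin n) (h1 : v j = 1) (h0 : ∀ k, k ≠ j → v k = 0) :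
    ∏ k, g k ^ v k = g j := by
  rw [Finset.prod_eq_single j (fun k _ hk => by rw [h0 k hk, zpow_zero]) (by simp), h1, zpow_one]

lemma prod_zpow_coe_eq {K : Type*} [Field K] (x : Fin n → K) (u : Fin n → Kˣ) (v : Fin n → ℤ)
    (hxu : ∀ j, v j ≠ 0 → x j = u j) :
    ∏ j, x j ^ v j = ↑(∏ j, u j ^ v j) := by
  rw [show ((↑(∏ j, u j ^ v j) : K)) = ∏ j, ((u j ^ v j : Kˣ) : K) from map_prod (Units.coeHom K) _ _]
  refine Finset.prod_congr rfl fun j _ => ?_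
  by_cases hv : v j = 0
  · simp [hv]
  · rw [hxu j hv, Units.val_zpow_eq_zpow_val]

/-- The subgroup of exponent vectors killed by a vector of units. -/
def mulKer {K : Type*} [Field K] (u : Fin n → Kˣ) : Submodule ℤ (Fin n → ℤ) where
  carrier := {v | ∏ j, u j ^ v j = 1}
  zero_mem' := by simp
  add_mem' := by
    intro a b ha hb
    simp only [Set.mem_setOf_eq, Pi.add_apply] at *
    calc ∏ j, u j ^ (a j + b j) = ∏ j, (u j ^ a j * u j ^ b j) :=
          Finset.prod_congr rfl fun j _ => zpow_add _ _ _
      _ = (∏ j, u j ^ a j) * ∏ j, u j ^ b j := Finset.prod_mul_distrib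
      _ = 1 := by rw [ha, hb, one_mul]
  smul_mem' := by
    intro m v hv
    simp only [Set.mem_setOf_eq] at *
    calc ∏ j, u j ^ ((m • v) j) = ∏ j, (u j ^ v j) ^ m :=
          Finset.prod_congr rfl fun j _ => by
            rw [Pi.smul_apply, smul_eq_mul, mul_comm, zpow_mul]
      _ = (∏ j, u j ^ v j) ^ m := Finset.prod_zpow _ _ _
      _ = 1 := by rw [hv, one_zpow]

lemma mem_mulKer_iff {K : Type*} [Field K] (u : Fin n → Kˣ) (v : Fin n → ℤ) :
    v ∈ mulKer u ↔ ∏ j, u j ^ v j = 1 := Iff.rfl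

/-- Vectors supported in `U`. -/
def suppSubmodule (n : ℕ) (U : Finset (Fin n)) : Submodule ℤ (Fin n → ℤ) where
  carrier := {v | ∀ j ∉ U, v j = 0}
  zero_mem' := fun j _ => rfl
  add_mem' := by intro a b ha hb j hj; simp [ha j hj, hb j hj]
  smul_mem' := by intro m v hv j hj; simp [hv j hj]

lemma mem_suppSubmodule_iff {U : Finset (Fin n)} (v : Fin n → ℤ) :
    v ∈ suppSubmodule n U ↔ ∀ j ∉ U, v j = 0 := Iff.rfl

lemma basis_repr_sum_eq (b : Module.Basis (Fin n) ℤ (Fin n → ℤ)) (g : Fin n → ℤ) (i : Fin n) :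
    b.repr (∑ i', g i' • b i') i = g i := by
  rw [map_sum, Finsupp.finset_sum_apply]
  have : ∀ i' : Fin n, (b.repr (g i' • b i')) i = if i' = i then g i' else 0 := by
    intro i'
    rw [show b.repr (g i' • b i') = g i' • b.repr (b i') from LinearEquiv.map_smul _ _ _,
      Module.Basis.repr_self, Finsupp.smul_apply, Finsupp.single_apply]
    split <;> simp
  rw [Finset.sum_congr rfl fun i' _ => this i']
  simp

end Helpers


section AdaptedBasis

set_option synthInstance.maxHeartbeats 1000000 in
set_option maxHeartbeats 1000000 in
lemma exists_adapted_basis (n r t : ℕ) (hrt : r ≤ t) (htn : t ≤ n)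
    (U : Finset (Fin n)) (hU : U.card = t)
    (f : Fin n → Fin n → ℤ) (hfli : LinearIndependent ℤ f)
    (hfsp : Submodule.span ℤ (Set.range f) = ⊤)
    (hfU : ∀ i : Fin n, (i : ℕ) < r → ∀ j ∉ U, f i j = 0) :
    ∃ b : Module.Basis (Fin n) ℤ (Fin n → ℤ),
      (∀ i : Fin n, (i : ℕ) < r → b i = f i) ∧
      (∀ i : Fin n, (i : ℕ) < t → ∀ j ∉ U, b i j = 0) ∧
      (∀ i : Fin n, t ≤ (i : ℕ) → ∃ j, j ∉ U ∧ b i = Pi.single j 1) ∧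
      (∀ j, j ∉ U → ∃ i : Fin n, t ≤ (i : ℕ) ∧ b i = Pi.single j 1) := by
  classical
  have hcV : Uᶜ.card = n - t := by
    rw [Finset.card_compl, hU]; simp
  set oV : Fin (n - t) ≃o {x // x ∈ Uᶜ} := Uᶜ.orderIsoOfFin hcV with hoV
  set M : Submodule ℤ (Fin n → ℤ) :=
    { carrier := {v | ∀ j ∉ U, v j = 0}
      zero_mem' := fun j _ => rfl
      add_mem' := by intro a b ha hb j hj; simp [ha j hj, hb j hj]
      smul_mem' := by intro m v hv j hj; simp [hv j hj] } with hM
  have hMmem : ∀ v : Fin n → ℤ, v ∈ M ↔ ∀ j ∉ U, v j = 0 := fun v => Iff.rfl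
  set N : Submodule ℤ (Fin n → ℤ) := Submodule.span ℤ (f '' {i : Fin n | (i : ℕ) < r}) with hN
  set N₂ : Submodule ℤ (Fin n → ℤ) := Submodule.span ℤ (f '' {i : Fin n | r ≤ (i : ℕ)}) with hN₂
  have hNM : N ≤ M := by
    rw [hN, Submodule.span_le]
    rintro _ ⟨i, hi, rfl⟩ j hj
    exact hfU i hi j hj
  set P : Submodule ℤ (Fin n → ℤ) := M ⊓ N₂ with hP
  have hPM : P ≤ M := inf_le_left
  have hNN₂ : N ⊔ N₂ = ⊤ := by
    rw [hN, hN₂, ← Submodule.span_union, ← Set.image_union]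
    have huniv : {i : Fin n | (i : ℕ) < r} ∪ {i : Fin n | r ≤ (i : ℕ)} = Set.univ := by
      ext i; simp [lt_or_ge]
    rw [huniv, Set.image_univ, hfsp]
  have hNPdisj : Disjoint N P := by
    have hsets : Disjoint {i : Fin n | (i : ℕ) < r} {i : Fin n | r ≤ (i : ℕ)} := by
      rw [Set.disjoint_left]; intro i hi hi'; simp only [Set.mem_setOf_eq] at hi hi'; omega
    exact (hfli.disjoint_span_image hsets).mono_right inf_le_right
  have hNP : N ⊔ P = M := by
    refine le_antisymm (sup_le hNM hPM) ?_
    intro v hv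
    have : v ∈ N ⊔ N₂ := by rw [hNN₂]; trivial
    obtain ⟨a, ha, c, hc, rfl⟩ := Submodule.mem_sup.mp this
    refine Submodule.mem_sup.mpr ⟨a, ha, c, ⟨?_, hc⟩, rfl⟩
    have : c = (a + c) - a := by ring
    rw [this]
    exact sub_mem hv (hNM ha)
  -- basis of M indexed by U
  have hMind : LinearIndependent ℤ (fun j : {x // x ∈ U} => (Pi.single (j : Fin n) (1 : ℤ) : Fin n → ℤ)) := by
    have h1 : LinearIndependent ℤ (fun j : Fin n => Pi.single j (1 : ℤ)) := by
      exact Pi.linearIndependent_single_one (Fin n) ℤ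
    exact h1.comp (Subtype.val) Subtype.val_injective
  have hMB : ∀ j : {x // x ∈ U}, Pi.single (j : Fin n) (1 : ℤ) ∈ M := by
    intro j j' hj'
    exact Pi.single_eq_of_ne (fun heq => hj' (by rw [heq]; exact j.2)) 1
  set eM : {x // x ∈ U} → M := fun j => ⟨Pi.single (j : Fin n) 1, hMB j⟩ with heM
  have hMind' : LinearIndependent ℤ eM := by
    apply LinearIndependent.of_comp M.subtype
    convert hMind using 1
    rfl
  have hMspan : ⊤ ≤ Submodule.span ℤ (Set.range eM) := by
    rintro ⟨v, hv⟩ -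
    have hvrepr : (⟨v, hv⟩ : M) = ∑ j : {x // x ∈ U}, v (j : Fin n) • eM j := by
      apply Subtype.ext
      have : ((∑ j : {x // x ∈ U}, v (j : Fin n) • eM j : M) : Fin n → ℤ)
          = ∑ j : {x // x ∈ U}, v (j : Fin n) • Pi.single (j : Fin n) (1 : ℤ) := by
        push_cast; rfl
      rw [this]
      funext j'
      rw [Finset.sum_apply]
      by_cases hj' : j' ∈ U
      · rw [Finset.sum_eq_single (⟨j', hj'⟩ : {x // x ∈ U})]
        · simp
        · intro k _ hk
          have hne : (k : Fin n) ≠ j' := fun heq => hk (Subtype.ext heq)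
          rw [Pi.smul_apply, Pi.single_eq_of_ne (Ne.symm hne), smul_zero]
        · simp
      · show v j' = _
        rw [hv j' hj']
        symm
        apply Finset.sum_eq_zero
        intro k _
        have : j' ≠ (k : Fin n) := fun heq => hj' (by rw [heq]; exact k.2)
        rw [Pi.smul_apply, Pi.single_eq_of_ne this, smul_zero]
    rw [hvrepr]
    exact Submodule.sum_mem _ fun k _ => Submodule.smul_mem _ _ (Submodule.subset_span ⟨k, rfl⟩)
  set MBasis : Module.Basis {x // x ∈ U} ℤ M := Module.Basis.mk hMind' hMspan with hMBasis
  have hfinM : Module.finrank ℤ M = t := by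
    rw [Module.finrank_eq_card_basis MBasis, Fintype.card_coe, hU]
  -- finrank of N
  set f₁ : Fin r → (Fin n → ℤ) := fun i => f (Fin.castLE (hrt.trans htn) i) with hf₁
  have hranges : Set.range f₁ = f '' {i : Fin n | (i : ℕ) < r} := by
    ext v
    constructor
    · rintro ⟨k, rfl⟩
      exact ⟨Fin.castLE (hrt.trans htn) k, k.isLt, rfl⟩
    · rintro ⟨i, hi, rfl⟩
      exact ⟨⟨(i : ℕ), hi⟩, congrArg f (Fin.ext rfl)⟩
  have hf₁li : LinearIndependent ℤ f₁ := hfli.comp _ (Fin.castLE_injective _)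
  have hfinN : Module.finrank ℤ N = r := by
    rw [hN, ← hranges, finrank_span_eq_card hf₁li, Fintype.card_fin]
  -- finrank of P via IsCompl inside M
  have hfinP : Module.finrank ℤ P = t - r := by
    set p : Submodule ℤ M := N.comap M.subtype with hp
    set q : Submodule ℤ M := P.comap M.subtype with hq
    have hinj : Function.Injective (Submodule.map M.subtype) :=
      Submodule.map_injective_of_injective M.injective_subtype
    have hmp : Submodule.map M.subtype p = N := by
      rw [hp, Submodule.map_comap_subtype, inf_eq_right.mpr hNM]
    have hmq : Submodule.map M.subtype q = P := by
      rw [hq, Submodule.map_comap_subtype, inf_eq_right.mpr hPM]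
    have hsup' : p ⊔ q = ⊤ := by
      apply hinj
      rw [Submodule.map_sup, hmp, hmq, Submodule.map_top, Submodule.range_subtype, hNP]
    have hinf' : p ⊓ q = ⊥ := by
      apply hinj
      rw [Submodule.map_inf _ M.injective_subtype, hmp, hmq, Submodule.map_bot,
        disjoint_iff.mp hNPdisj]
    have hcompl : IsCompl p q := ⟨disjoint_iff.mpr hinf', codisjoint_iff.mpr hsup'⟩
    have he : (p × q) ≃ₗ[ℤ] M := Submodule.prodEquivOfIsCompl p q hcompl
    have h1 : Module.finrank ℤ (p × q) = Module.finrank ℤ M := he.finrank_eq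
    have h2 : Module.finrank ℤ (p × q) = Module.finrank ℤ p + Module.finrank ℤ q :=
      Module.finrank_prod
    have h3 : Module.finrank ℤ p = r := by
      rw [← hfinN]; exact (Submodule.comapSubtypeEquivOfLe hNM).finrank_eq
    have h4 : Module.finrank ℤ q = Module.finrank ℤ P :=
      (Submodule.comapSubtypeEquivOfLe hPM).finrank_eq
    rw [h2, h3, h4, hfinM] at h1
    omega
  set gQ : Module.Basis (Fin (t - r)) ℤ P :=
    (Module.Free.chooseBasis ℤ P).reindex (Fintype.equivFinOfCardEq
      (by rw [← Module.finrank_eq_card_chooseBasisIndex, hfinP])) with hgQ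
  -- the adapted family
  set h : Fin n → (Fin n → ℤ) := fun i =>
    if hir : (i : ℕ) < r then f i
    else if hit : (i : ℕ) < t then
      (gQ ⟨(i : ℕ) - r, by omega⟩ : Fin n → ℤ)
    else Pi.single (↑(oV ⟨(i : ℕ) - t, by omega⟩) : Fin n) 1 with hh
  have hP2 : ∀ i : Fin n, (i : ℕ) < t → ∀ j ∉ U, h i j = 0 := by
    intro i hit j hj
    by_cases hir : (i : ℕ) < r
    · rw [hh]; simp only [dif_pos hir]; exact hfU i hir j hj
    · rw [hh]; simp only [dif_neg hir, dif_pos hit]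
      exact (hPM (gQ ⟨(i : ℕ) - r, by omega⟩).2) j hj
  have hP3 : ∀ i : Fin n, t ≤ (i : ℕ) → ∃ j, j ∉ U ∧ h i = Pi.single j 1 := by
    intro i hit
    refine ⟨↑(oV ⟨(i : ℕ) - t, by omega⟩), ?_, ?_⟩
    · have := (oV ⟨(i : ℕ) - t, by omega⟩).2
      exact fun hmem => (Finset.mem_compl.mp this) hmem
    · rw [hh]; simp only [dif_neg (by omega : ¬ (i : ℕ) < r), dif_neg (by omega : ¬ (i : ℕ) < t)]
  have hP4 : ∀ j, j ∉ U → ∃ i : Fin n, t ≤ (i : ℕ) ∧ h i = Pi.single j 1 := by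
    intro j hj
    obtain ⟨k, hk⟩ := oV.surjective ⟨j, Finset.mem_compl.mpr hj⟩
    refine ⟨⟨t + (k : ℕ), by omega⟩, by simp, ?_⟩
    rw [hh]
    simp only [Fin.val_mk]
    rw [dif_neg (show ¬ (t + (k : ℕ) < r) by omega), dif_neg (show ¬ (t + (k : ℕ) < t) by omega)]
    have hidx : (⟨t + (k : ℕ) - t, by omega⟩ : Fin (n - t)) = k := by
      apply Fin.ext; simp
    rw [hidx, hk]
  have hP1 : ∀ i : Fin n, (i : ℕ) < r → h i = f i := by
    intro i hir; rw [hh]; simp only [dif_pos hir]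
  -- spanning
  have hspan : ⊤ ≤ Submodule.span ℤ (Set.range h) := by
    have hsingle : ∀ j : Fin n, Pi.single j (1 : ℤ) ∈ Submodule.span ℤ (Set.range h) := by
      intro j
      by_cases hj : j ∈ U
      · have hmem : Pi.single j (1 : ℤ) ∈ M := by
          intro j' hj'
          exact Pi.single_eq_of_ne (fun hne => hj' (by rw [hne]; exact hj)) 1
        have hmem' : Pi.single j (1 : ℤ) ∈ N ⊔ P := by rw [hNP]; exact hmem
        have hNle : N ≤ Submodule.span ℤ (Set.range h) := by
          rw [hN, Submodule.span_le]
          rintro _ ⟨i, hi, rfl⟩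
          rw [← hP1 i hi]
          exact Submodule.subset_span ⟨i, rfl⟩
        have hPle : P ≤ Submodule.span ℤ (Set.range h) := by
          intro v hv
          have hrepr := Module.Basis.sum_repr gQ ⟨v, hv⟩
          have hval : v = ∑ kk, gQ.repr ⟨v, hv⟩ kk • ((gQ kk : Fin n → ℤ)) := by
            calc v = ((∑ kk, gQ.repr ⟨v, hv⟩ kk • gQ kk : P) : Fin n → ℤ) := by rw [hrepr]
              _ = ∑ kk, gQ.repr ⟨v, hv⟩ kk • ((gQ kk : Fin n → ℤ)) := by push_cast; rfl
          rw [hval]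
          refine Submodule.sum_mem _ fun kk _ => Submodule.smul_mem _ _ ?_
          have hk' : ((gQ kk : Fin n → ℤ)) = h ⟨r + (kk : ℕ), by omega⟩ := by
            rw [hh]
            simp only [Fin.val_mk]
            rw [dif_neg (show ¬ (r + (kk : ℕ) < r) by omega),
              dif_pos (show (r + (kk : ℕ) < t) by omega)]
            have hidx : (⟨r + (kk : ℕ) - r, by omega⟩ : Fin (t - r)) = kk := by
              apply Fin.ext; simp
            rw [hidx]
          rw [hk']
          exact Submodule.subset_span ⟨_, rfl⟩
        exact sup_le hNle hPle hmem'
      · obtain ⟨i, _, hi⟩ := hP4 j hj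
        rw [← hi]
        exact Submodule.subset_span ⟨i, rfl⟩
    have : Submodule.span ℤ (Set.range fun j : Fin n => Pi.single j (1 : ℤ))
        ≤ Submodule.span ℤ (Set.range h) := by
      rw [Submodule.span_le]
      rintro _ ⟨j, rfl⟩
      exact hsingle j
    refine le_trans ?_ this
    rw [show (Set.range fun j : Fin n => Pi.single j (1 : ℤ))
        = Set.range (Pi.basisFun ℤ (Fin n)) by
      ext v; constructor <;> rintro ⟨j, rfl⟩ <;> exact ⟨j, by rw [Pi.basisFun_apply]⟩]
    rw [(Pi.basisFun ℤ (Fin n)).span_eq]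
  -- linear independence via surjective endomorphism
  set bF : Module.Basis (Fin n) ℤ (Fin n → ℤ) := Pi.basisFun ℤ (Fin n) with hbF
  set T : (Fin n → ℤ) →ₗ[ℤ] (Fin n → ℤ) := bF.constr ℤ h with hT
  have hTr : LinearMap.range T = ⊤ := by
    rw [hT, Module.Basis.constr_range]
    exact le_antisymm le_top hspan
  have hTsurj : Function.Surjective T := LinearMap.range_eq_top.mp hTr
  have hTinj : Function.Injective T :=
    OrzechProperty.injective_of_surjective_endomorphism T hTsurj
  have hind : LinearIndependent ℤ h := by
    have h2 := bF.linearIndependent.map' T (LinearMap.ker_eq_bot.mpr hTinj)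
    have h3 : (⇑T ∘ ⇑bF) = h := by
      funext i
      simp only [Function.comp_apply, hT, Module.Basis.constr_basis]
    rwa [h3] at h2
  refine ⟨Module.Basis.mk hind hspan, ?_, ?_, ?_, ?_⟩
  · intro i hi; rw [Module.Basis.mk_apply]; exact hP1 i hi
  · intro i hi j hj; rw [Module.Basis.mk_apply]; exact hP2 i hi j hj
  · intro i hi; rw [Module.Basis.mk_apply]; exact hP3 i hi
  · intro j hj
    obtain ⟨i, hi1, hi2⟩ := hP4 j hj
    exact ⟨i, hi1, by rw [Module.Basis.mk_apply]; exact hi2⟩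

end AdaptedBasis



/-- **Structure of intersections of the hypersurfaces `A_I`** (Lemma 4.6).
Let `K` be a field, `I₁,…,I_k` nonempty subsets of `{1,…,n}`, and
`X = {x ∈ Kⁿ : ∏_{i∈I_j} x_i = 1 for all j}`.  Let `s = n − |I₁ ∪ … ∪ I_k|`, let
`L ⊆ ℤⁿ` be the subgroup generated by the indicator vectors of the `I_j`, of rank
`r ≥ 1` and with elementary divisors `c₁,…,c_r` (encoded here by a basis `f` of `ℤⁿ`
and a vector `c` with `cᵢ ≠ 0` exactly for `i < r`, such that
`L = c₁ℤ·f₁ ⊕ … ⊕ c_rℤ·f_r`), so that `s + r ≤ n`.  Then there is a bijection, given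
in both directions by monomial maps in the coordinates, between `X` and
`K^s × (Kˣ)^{n−s−r} × ∏_{i=1}^r {y ∈ Kˣ : y^{cᵢ} = 1}` (realized inside `Kⁿ` as the
set of `y` whose first `r` coordinates satisfy `yᵢ^{cᵢ} = 1`, whose next `n−s−r`
coordinates are nonzero, and whose last `s` coordinates are arbitrary). -/
theorem intersection_of_hypersurfaces_structure
    (K : Type*) [Field K] (n k : ℕ) (hn : 1 ≤ n) (hk : 1 ≤ k)
    (I : Fin k → Finset (Fin n)) (hI : ∀ j, (I j).Nonempty)
    (s r : ℕ) (hr : 1 ≤ r) (hsr : s + r ≤ n)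
    (hs : s = n - (Finset.univ.biUnion I).card)
    (f : Fin n → (Fin n → ℤ))
    (hf : LinearIndependent ℤ f ∧ Submodule.span ℤ (Set.range f) = ⊤)
    (c : Fin n → ℤ) (hc : ∀ i : Fin n, c i = 0 ↔ r ≤ (i : ℕ))
    (hL : ∀ v : Fin n → ℤ,
      v ∈ Submodule.span ℤ
          (Set.range fun j : Fin k => fun i : Fin n => if i ∈ I j then (1 : ℤ) else 0) ↔
        ∃ m : Fin n → ℤ, v = ∑ i : Fin n, (m i * c i) • f i) :
    ∃ F G : (Fin n → K) → (Fin n → K),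
      (∃ E : Fin n → Fin n → ℤ, ∀ x i, F x i = ∏ j : Fin n, x j ^ E i j) ∧
      (∃ E : Fin n → Fin n → ℤ, ∀ y i, G y i = ∏ j : Fin n, y j ^ E i j) ∧
      Set.BijOn F {x : Fin n → K | ∀ j : Fin k, ∏ i ∈ I j, x i = 1}
        {y : Fin n → K | (∀ i : Fin n, (i : ℕ) < r → y i ^ c i = 1) ∧
          ∀ i : Fin n, r ≤ (i : ℕ) → (i : ℕ) < n - s → y i ≠ 0} ∧
      Set.BijOn G
        {y : Fin n → K | (∀ i : Fin n, (i : ℕ) < r → y i ^ c i = 1) ∧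
          ∀ i : Fin n, r ≤ (i : ℕ) → (i : ℕ) < n - s → y i ≠ 0}
        {x : Fin n → K | ∀ j : Fin k, ∏ i ∈ I j, x i = 1} ∧
      (∀ x ∈ {x : Fin n → K | ∀ j : Fin k, ∏ i ∈ I j, x i = 1}, G (F x) = x) ∧
      (∀ y ∈ {y : Fin n → K | (∀ i : Fin n, (i : ℕ) < r → y i ^ c i = 1) ∧
          ∀ i : Fin n, r ≤ (i : ℕ) → (i : ℕ) < n - s → y i ≠ 0}, F (G y) = y) := by
  classical
  set U : Finset (Fin n) := Finset.univ.biUnion I with hUdef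
  have hUn : U.card ≤ n := by
    have := Finset.card_le_univ U
    simpa using this
  have hUcard : U.card = n - s := by omega
  have hrt : r ≤ n - s := by omega
  have htn : n - s ≤ n := by omega
  set A : Fin k → (Fin n → ℤ) := fun j => fun i => if i ∈ I j then (1 : ℤ) else 0 with hA
  have hAU : ∀ j₀ : Fin k, ∀ j ∉ U, A j₀ j = 0 := by
    intro j₀ j hj
    rw [hA]
    simp only
    rw [if_neg]
    intro hmem
    exact hj (Finset.mem_biUnion.mpr ⟨j₀, Finset.mem_univ _, hmem⟩)
  have hspanU : ∀ v ∈ Submodule.span ℤ (Set.range A), ∀ j ∉ U, v j = 0 := by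
    intro v hv
    have hle : Submodule.span ℤ (Set.range A) ≤ suppSubmodule n U := by
      rw [Submodule.span_le]
      rintro _ ⟨j₀, rfl⟩
      exact hAU j₀
    exact hle hv
  have hcne : ∀ i : Fin n, (i : ℕ) < r → c i ≠ 0 := by
    intro i hi h0
    have := (hc i).1 h0
    omega
  have hcf : ∀ i : Fin n, (i : ℕ) < r → (c i) • f i ∈ Submodule.span ℤ (Set.range A) := by
    intro i hi
    refine (hL _).mpr ⟨Pi.single i 1, ?_⟩
    rw [Finset.sum_eq_single i]
    · rw [Pi.single_eq_same, one_mul]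
    · intro j _ hj
      rw [Pi.single_eq_of_ne hj, zero_mul, zero_smul]
    · intro hni
      exact absurd (Finset.mem_univ i) hni
  have hfU : ∀ i : Fin n, (i : ℕ) < r → ∀ j ∉ U, f i j = 0 := by
    intro i hi j hj
    have h0 : (c i • f i) j = 0 := hspanU _ (hcf i hi) j hj
    rw [Pi.smul_apply, smul_eq_mul] at h0
    rcases mul_eq_zero.mp h0 with h | h
    · exact absurd h (hcne i hi)
    · exact h
  obtain ⟨b, hb1, hb2, hb3, hb4⟩ :=
    exists_adapted_basis n r (n - s) hrt htn U hUcard f hf.1 hf.2 hfU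
  set E' : Fin n → Fin n → ℤ := fun j i => b.repr (Pi.single j 1) i with hE'
  have hH'H : ∀ j j' : Fin n, ∑ i, E' j i * b i j' = if j = j' then 1 else 0 := by
    intro j j'
    simp only [hE']
    have h2 := congrFun (Module.Basis.sum_repr b (Pi.single j (1 : ℤ))) j'
    rw [Finset.sum_apply] at h2
    simp only [Pi.smul_apply, smul_eq_mul] at h2
    rw [h2, Pi.single_apply]
    by_cases hjj : j = j'
    · rw [if_pos hjj, if_pos hjj.symm]
    · rw [if_neg hjj, if_neg (fun hcon => hjj hcon.symm)]
  have hHH' : ∀ i i' : Fin n, ∑ j, b i j * E' j i' = if i = i' then 1 else 0 := by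
    intro i i'
    have hmat : (Matrix.of fun j i => E' j i) * (Matrix.of fun i j => b i j) = 1 := by
      ext j j'
      rw [Matrix.mul_apply]
      simp only [Matrix.of_apply]
      rw [hH'H j j', Matrix.one_apply]
    have hmat2 := mul_eq_one_comm.mp hmat
    have h3 : ((Matrix.of fun i j => b i j) * (Matrix.of fun j i => E' j i)) i i'
        = (1 : Matrix (Fin n) (Fin n) ℤ) i i' := by rw [hmat2]
    rw [Matrix.mul_apply, Matrix.one_apply] at h3
    simpa using h3
  have hbinj : Function.Injective b := b.injective
  have hE'0 : ∀ j ∈ U, ∀ i : Fin n, n - s ≤ (i : ℕ) → E' j i = 0 := by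
    intro j hj i hi
    obtain ⟨j', hj', hbi⟩ := hb3 i hi
    have h1 := congrFun (Module.Basis.sum_repr b (Pi.single j (1 : ℤ))) j'
    rw [Finset.sum_apply] at h1
    simp only [Pi.smul_apply, smul_eq_mul] at h1
    have hzero : ∀ i'' ∈ Finset.univ, i'' ≠ i →
        b.repr (Pi.single j (1 : ℤ)) i'' * b i'' j' = 0 := by
      intro i'' _ hne
      rcases lt_or_ge ((i'' : ℕ)) (n - s) with hlt | hge
      · rw [hb2 i'' hlt j' hj', mul_zero]
      · obtain ⟨j'', hj'', hbi''⟩ := hb3 i'' hge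
        have hjne : j' ≠ j'' := by
          intro heq
          exact hne (hbinj (by rw [hbi, hbi'', heq]))
        rw [hbi'', Pi.single_eq_of_ne hjne, mul_zero]
    rw [Finset.sum_eq_single_of_mem i (Finset.mem_univ i) hzero, hbi, Pi.single_eq_same,
      mul_one, Pi.single_eq_of_ne (fun h => hj' (by rw [h]; exact hj)) 1] at h1
    simp only [hE']
    exact h1
  set F : (Fin n → K) → (Fin n → K) := fun x i => ∏ j, x j ^ b i j with hF
  set G : (Fin n → K) → (Fin n → K) := fun y j => ∏ i, y i ^ E' j i with hG
  -- ===== direction X → Y =====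
  have key1 : ∀ x : Fin n → K, (∀ j : Fin k, ∏ i ∈ I j, x i = 1) →
      ((∀ i : Fin n, (i : ℕ) < r → F x i ^ c i = 1) ∧
        (∀ i : Fin n, r ≤ (i : ℕ) → (i : ℕ) < n - s → F x i ≠ 0)) ∧ G (F x) = x := by
    intro x hx
    have hxU : ∀ j ∈ U, x j ≠ 0 := by
      intro j hj h0
      obtain ⟨j₀, _, hj₀⟩ := Finset.mem_biUnion.mp hj
      have : (0 : K) = 1 := by
        rw [← Finset.prod_eq_zero hj₀ h0]
        exact hx j₀
      exact zero_ne_one this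
    set u : Fin n → Kˣ := fun j => if hj : j ∈ U then Units.mk0 (x j) (hxU j hj) else 1 with hu'
    have hu : ∀ j ∈ U, (u j : K) = x j := by
      intro j hj
      rw [hu']
      simp only [dif_pos hj, Units.val_mk0]
    have hgen : ∀ j₀ : Fin k, (∏ j, u j ^ A j₀ j) = 1 := by
      intro j₀
      apply Units.ext
      rw [Units.val_one,
        show ((∏ j, u j ^ A j₀ j : Kˣ) : K) = ∏ j, ((u j ^ A j₀ j : Kˣ) : K) from
          map_prod (Units.coeHom K) _ _]
      calc ∏ j, ((u j ^ A j₀ j : Kˣ) : K) = ∏ j, (if j ∈ I j₀ then x j else 1) := by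
            refine Finset.prod_congr rfl fun j _ => ?_
            rw [Units.val_zpow_eq_zpow_val]
            simp only [hA]
            by_cases hmem : j ∈ I j₀
            · rw [if_pos hmem, if_pos hmem, zpow_one,
                hu j (Finset.mem_biUnion.mpr ⟨j₀, Finset.mem_univ _, hmem⟩)]
            · rw [if_neg hmem, if_neg hmem, zpow_zero]
        _ = ∏ j ∈ Finset.univ ∩ I j₀, x j := Finset.prod_ite_mem _ _ _
        _ = 1 := by rw [Finset.univ_inter]; exact hx j₀
    have hker : ∀ v ∈ Submodule.span ℤ (Set.range A), ∏ j, u j ^ v j = 1 := by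
      intro v hv
      have hle : Submodule.span ℤ (Set.range A) ≤ mulKer u := by
        rw [Submodule.span_le]
        rintro _ ⟨j₀, rfl⟩
        exact hgen j₀
      exact hle hv
    have hunit_f : ∀ i : Fin n, (i : ℕ) < r → (∏ j, u j ^ f i j) ^ c i = 1 := by
      intro i hi
      have h1 := hker _ (hcf i hi)
      calc (∏ j, u j ^ f i j) ^ c i = ∏ j, (u j ^ f i j) ^ c i :=
            (Finset.prod_zpow _ _ _).symm
        _ = ∏ j, u j ^ ((c i • f i) j) := by
            refine Finset.prod_congr rfl fun j _ => ?_
            rw [← zpow_mul, Pi.smul_apply, smul_eq_mul, mul_comm]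
        _ = 1 := h1
    have hFcoe : ∀ i : Fin n, (i : ℕ) < n - s → F x i = ↑(∏ j, u j ^ b i j) := by
      intro i hi
      refine prod_zpow_coe_eq _ _ _ ?_
      intro j hbij
      by_cases hj : j ∈ U
      · exact (hu j hj).symm
      · exact absurd (hb2 i hi j hj) hbij
    refine ⟨⟨?_, ?_⟩, ?_⟩
    · intro i hir
      rw [hFcoe i (lt_of_lt_of_le hir hrt), ← Units.val_zpow_eq_zpow_val, hb1 i hir,
        hunit_f i hir, Units.val_one]
    · intro i _ hit
      rw [hFcoe i hit]
      exact Units.ne_zero _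
    · funext j
      by_cases hj : j ∈ U
      · have hw : ∀ i : Fin n, E' j i ≠ 0 → F x i = ↑(∏ j', u j' ^ b i j') := by
          intro i hne
          rcases lt_or_ge ((i : ℕ)) (n - s) with h | h
          · exact hFcoe i h
          · exact absurd (hE'0 j hj i h) hne
        have h1 : G (F x) j = ↑(∏ i, (∏ j', u j' ^ b i j') ^ E' j i) :=
          prod_zpow_coe_eq _ _ _ hw
        rw [h1, prod_prod_zpow]
        have h2 : ∀ j' : Fin n, (∑ i, b i j' * E' j i) = if j = j' then 1 else 0 := by
          intro j'
          rw [← hH'H j j']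
          exact Finset.sum_congr rfl fun i _ => mul_comm _ _
        calc (↑(∏ j', u j' ^ (∑ i, b i j' * E' j i)) : K)
            = ↑(∏ j', u j' ^ (if j = j' then (1 : ℤ) else 0)) := by
              congr 1
              exact Finset.prod_congr rfl fun j' _ => by rw [h2 j']
          _ = ↑(u j) := by
              congr 1
              refine prod_zpow_eq_single u _ j (by simp) fun kk hkk => ?_
              rw [if_neg (fun hcon => hkk hcon.symm)]
          _ = x j := hu j hj
      · obtain ⟨i₀, hi₀, hbi₀⟩ := hb4 j hj
        have hE'j : ∀ i, E' j i = if i₀ = i then 1 else 0 := by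
          intro i
          simp only [hE']
          rw [← hbi₀, Module.Basis.repr_self, Finsupp.single_apply]
        have h1 : G (F x) j = F x i₀ := by
          refine prod_zpow_eq_single (F x) _ i₀ (by rw [hE'j]; simp) fun kk hkk => ?_
          rw [hE'j, if_neg (fun hcon => hkk hcon.symm)]
        rw [h1]
        show ∏ jj, x jj ^ b i₀ jj = x j
        rw [hbi₀]
        exact prod_zpow_eq_single x _ j (by simp) fun kk hkk => Pi.single_eq_of_ne hkk 1
  -- ===== direction Y → X =====
  have key2 : ∀ y : Fin n → K,
      ((∀ i : Fin n, (i : ℕ) < r → y i ^ c i = 1) ∧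
        (∀ i : Fin n, r ≤ (i : ℕ) → (i : ℕ) < n - s → y i ≠ 0)) →
      (∀ j₀ : Fin k, ∏ i ∈ I j₀, G y i = 1) ∧ F (G y) = y := by
    intro y hy
    have hyne : ∀ i : Fin n, (i : ℕ) < n - s → y i ≠ 0 := by
      intro i hi
      rcases lt_or_ge ((i : ℕ)) r with h | h
      · intro h0
        have h1 := hy.1 i h
        rw [h0, zero_zpow _ (hcne i h)] at h1
        exact zero_ne_one h1
      · exact hy.2 i h hi
    set w : Fin n → Kˣ :=
      fun i => if hi : (i : ℕ) < n - s then Units.mk0 (y i) (hyne i hi) else 1 with hw'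
    have hwv : ∀ i : Fin n, (i : ℕ) < n - s → (w i : K) = y i := by
      intro i hi
      rw [hw']
      simp only [dif_pos hi, Units.val_mk0]
    have hwc : ∀ i : Fin n, w i ^ c i = 1 := by
      intro i
      rcases lt_or_ge ((i : ℕ)) r with h | h
      · apply Units.ext
        rw [Units.val_one, Units.val_zpow_eq_zpow_val, hwv i (lt_of_lt_of_le h hrt)]
        exact hy.1 i h
      · rw [(hc i).2 h, zpow_zero]
    have hGcoe : ∀ j ∈ U, G y j = ↑(∏ i, w i ^ E' j i) := by
      intro j hj
      refine prod_zpow_coe_eq _ _ _ ?_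
      intro i hne
      rcases lt_or_ge ((i : ℕ)) (n - s) with h | h
      · exact (hwv i h).symm
      · exact absurd (hE'0 j hj i h) hne
    constructor
    · intro j₀
      obtain ⟨m, hm⟩ := (hL (A j₀)).mp (Submodule.subset_span ⟨j₀, rfl⟩)
      have hmb : A j₀ = ∑ i, (m i * c i) • b i := by
        rw [hm]
        refine Finset.sum_congr rfl fun i _ => ?_
        rcases lt_or_ge ((i : ℕ)) r with h | h
        · rw [hb1 i h]
        · rw [(hc i).2 h, mul_zero, zero_smul, zero_smul]
      have hreprA : ∀ i, b.repr (A j₀) i = m i * c i := by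
        intro i
        rw [hmb]
        exact basis_repr_sum_eq b _ i
      have hsumE' : ∀ i, ∑ j ∈ I j₀, E' j i = m i * c i := by
        intro i
        have hAsum : A j₀ = ∑ j ∈ I j₀, Pi.single j (1 : ℤ) := by
          funext i'
          rw [Finset.sum_apply, Finset.sum_pi_single, hA]
        calc ∑ j ∈ I j₀, E' j i = (b.repr (∑ j ∈ I j₀, Pi.single j (1 : ℤ))) i := by
              rw [map_sum, Finsupp.finset_sum_apply]
          _ = b.repr (A j₀) i := by rw [← hAsum]
          _ = m i * c i := hreprA i
      have hIU : ∀ j ∈ I j₀, j ∈ U :=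
        fun j hj => Finset.mem_biUnion.mpr ⟨j₀, Finset.mem_univ _, hj⟩
      have h1 : ∏ i ∈ I j₀, G y i = ↑(∏ j ∈ I j₀, ∏ i, w i ^ E' j i) := by
        rw [show ((↑(∏ j ∈ I j₀, ∏ i, w i ^ E' j i) : K))
            = ∏ j ∈ I j₀, ((∏ i, w i ^ E' j i : Kˣ) : K) from map_prod (Units.coeHom K) _ _]
        exact Finset.prod_congr rfl fun j hj => hGcoe j (hIU j hj)
      have h2 : ∏ j ∈ I j₀, ∏ i, w i ^ E' j i = ∏ i, w i ^ (m i * c i) := by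
        calc ∏ j ∈ I j₀, ∏ i, w i ^ E' j i = ∏ i, ∏ j ∈ I j₀, w i ^ E' j i :=
              Finset.prod_comm
          _ = ∏ i, w i ^ (∑ j ∈ I j₀, E' j i) :=
              Finset.prod_congr rfl fun i _ => (zpow_sum' _ _ _).symm
          _ = ∏ i, w i ^ (m i * c i) :=
              Finset.prod_congr rfl fun i _ => by rw [hsumE' i]
      have h3 : ∏ i, w i ^ (m i * c i) = 1 := by
        calc ∏ i, w i ^ (m i * c i) = ∏ i, (w i ^ c i) ^ m i := by
              refine Finset.prod_congr rfl fun i _ => ?_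
              rw [← zpow_mul, mul_comm]
          _ = 1 := by
              rw [Finset.prod_congr rfl fun i _ => by rw [hwc i]]
              simp
      rw [h1, h2, h3, Units.val_one]
    · funext i
      rcases lt_or_ge ((i : ℕ)) (n - s) with hit | hit
      · have hw2 : ∀ j : Fin n, b i j ≠ 0 → G y j = ↑(∏ i', w i' ^ E' j i') := by
          intro j hbij
          by_cases hj : j ∈ U
          · exact hGcoe j hj
          · exact absurd (hb2 i hit j hj) hbij
        have h1 : F (G y) i = ↑(∏ j, (∏ i', w i' ^ E' j i') ^ b i j) :=
          prod_zpow_coe_eq _ _ _ hw2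
        rw [h1, prod_prod_zpow]
        have h2 : ∀ i' : Fin n, (∑ j, E' j i' * b i j) = if i = i' then 1 else 0 := by
          intro i'
          rw [← hHH' i i']
          exact Finset.sum_congr rfl fun j _ => mul_comm _ _
        calc (↑(∏ i', w i' ^ (∑ j, E' j i' * b i j)) : K)
            = ↑(∏ i', w i' ^ (if i = i' then (1 : ℤ) else 0)) := by
              congr 1
              exact Finset.prod_congr rfl fun i' _ => by rw [h2 i']
          _ = ↑(w i) := by
              congr 1
              refine prod_zpow_eq_single w _ i (by simp) fun kk hkk => ?_
              rw [if_neg (fun hcon => hkk hcon.symm)]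
          _ = y i := hwv i hit
      · obtain ⟨j₀, hj₀, hbi⟩ := hb3 i hit
        have h1 : F (G y) i = G y j₀ := by
          refine prod_zpow_eq_single (G y) _ j₀ (by rw [hbi]; simp) fun kk hkk => ?_
          rw [hbi]
          exact Pi.single_eq_of_ne hkk 1
        rw [h1]
        have hE'j : ∀ i', E' j₀ i' = if i = i' then 1 else 0 := by
          intro i'
          simp only [hE']
          rw [← hbi, Module.Basis.repr_self, Finsupp.single_apply]
        refine prod_zpow_eq_single y _ i (by rw [hE'j]; simp) fun kk hkk => ?_
        rw [hE'j, if_neg (fun hcon => hkk hcon.symm)]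
  -- ===== assembly =====
  have hMapF : Set.MapsTo F {x : Fin n → K | ∀ j : Fin k, ∏ i ∈ I j, x i = 1}
      {y : Fin n → K | (∀ i : Fin n, (i : ℕ) < r → y i ^ c i = 1) ∧
        ∀ i : Fin n, r ≤ (i : ℕ) → (i : ℕ) < n - s → y i ≠ 0} :=
    fun x hx => (key1 x hx).1
  have hMapG : Set.MapsTo G {y : Fin n → K | (∀ i : Fin n, (i : ℕ) < r → y i ^ c i = 1) ∧
        ∀ i : Fin n, r ≤ (i : ℕ) → (i : ℕ) < n - s → y i ≠ 0}
      {x : Fin n → K | ∀ j : Fin k, ∏ i ∈ I j, x i = 1} :=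
    fun y hy => (key2 y hy).1
  have hGF : ∀ x ∈ {x : Fin n → K | ∀ j : Fin k, ∏ i ∈ I j, x i = 1}, G (F x) = x :=
    fun x hx => (key1 x hx).2
  have hFG : ∀ y ∈ {y : Fin n → K | (∀ i : Fin n, (i : ℕ) < r → y i ^ c i = 1) ∧
      ∀ i : Fin n, r ≤ (i : ℕ) → (i : ℕ) < n - s → y i ≠ 0}, F (G y) = y :=
    fun y hy => (key2 y hy).2
  exact ⟨F, G, ⟨fun i j => b i j, fun x i => rfl⟩, ⟨E', fun y i => rfl⟩,
    Set.InvOn.bijOn ⟨hGF, hFG⟩ hMapF hMapG,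
    Set.InvOn.bijOn ⟨hFG, hGF⟩ hMapG hMapF, hGF, hFG⟩
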